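/- arXiv:2002.07017 — 2 statements merged into one kernel-verified Lean document; each statement's English description precedes it below -/
import Mathlib

section
/- Let v1, v2, y be jointly distributed random variables and z1 a random variable satisfying I(y; z1 | v1, v2) = 0 (i.e., z1 is a representation of v1, conditionally independent of y given the views). Then I(v1; y | z1) ≤ I(v1; v2 | z1) + I(v1; y | v2). -/
open scoped BigOperators

/-- Conditional mutual information I(X;Y|Z) for a finite probability space
given by a pmf `p` on `Ω`. -/
noncomputable def condMI {Ω A B C : Type} [Fintype Ω] [Fintype A] [Fintype B] [Fintype C]
    [DecidableEq A] [DecidableEq B] [DecidableEq C]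
    (p : Ω → ℝ) (X : Ω → A) (Y : Ω → B) (Z : Ω → C) : ℝ :=
  ∑ a : A, ∑ b : B, ∑ c : C,
    (∑ ω : Ω, if X ω = a ∧ Y ω = b ∧ Z ω = c then p ω else 0) *
      Real.log
        ((∑ ω : Ω, if X ω = a ∧ Y ω = b ∧ Z ω = c then p ω else 0) *
            (∑ ω : Ω, if Z ω = c then p ω else 0) /
          ((∑ ω : Ω, if X ω = a ∧ Z ω = c then p ω else 0) *
            (∑ ω : Ω, if Y ω = b ∧ Z ω = c then p ω else 0)))

/-- Mutual information I(X;Y) as conditional mutual information given a constant. -/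
noncomputable def mi {Ω A B : Type} [Fintype Ω] [Fintype A] [Fintype B]
    [DecidableEq A] [DecidableEq B] (p : Ω → ℝ) (X : Ω → A) (Y : Ω → B) : ℝ :=
  condMI p X Y (fun _ => ())

open Finset

section helpers
variable {Ω : Type} [Fintype Ω]

lemma sumIf_congr (p : Ω → ℝ) {S T : Ω → Prop} [DecidablePred S] [DecidablePred T]
    (h : ∀ ω, S ω ↔ T ω) :
    (∑ ω, if S ω then p ω else 0) = ∑ ω, if T ω then p ω else 0 :=
  Finset.sum_congr rfl fun ω _ => if_congr (h ω) rfl rfl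

lemma marg (p : Ω → ℝ) {B : Type} [Fintype B] [DecidableEq B] (Y : Ω → B)
    (S : Ω → Prop) [DecidablePred S] :
    (∑ b : B, ∑ ω, if Y ω = b ∧ S ω then p ω else 0) = ∑ ω, if S ω then p ω else 0 := by
  rw [Finset.sum_comm]
  refine Finset.sum_congr rfl fun ω _ => ?_
  simp [ite_and, Finset.sum_ite_eq]

end helpers

/-- Conditional mutual information of an abstract joint distribution. -/
noncomputable def CMI {A B C : Type} [Fintype A] [Fintype B] [Fintype C] (q : A → B → C → ℝ) : ℝ :=
  ∑ a : A, ∑ b : B, ∑ c : C,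
    q a b c * Real.log (q a b c * (∑ a' : A, ∑ b' : B, q a' b' c) /
      ((∑ b' : B, q a b' c) * (∑ a' : A, q a' b c)))

lemma condMI_eq {Ω A B C : Type} [Fintype Ω] [Fintype A] [Fintype B] [Fintype C]
    [DecidableEq A] [DecidableEq B] [DecidableEq C]
    (p : Ω → ℝ) (X : Ω → A) (Y : Ω → B) (Z : Ω → C) :
    condMI p X Y Z = CMI (fun a b c => ∑ ω : Ω, if X ω = a ∧ Y ω = b ∧ Z ω = c then p ω else 0) := by
  have hxz : ∀ a c, (∑ b : B, ∑ ω : Ω, if X ω = a ∧ Y ω = b ∧ Z ω = c then p ω else 0)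
      = ∑ ω : Ω, if X ω = a ∧ Z ω = c then p ω else 0 := by
    intro a c
    rw [show (∑ b : B, ∑ ω : Ω, if X ω = a ∧ Y ω = b ∧ Z ω = c then p ω else 0)
        = ∑ b : B, ∑ ω : Ω, if Y ω = b ∧ (X ω = a ∧ Z ω = c) then p ω else 0 from
      Finset.sum_congr rfl fun b _ => sumIf_congr p fun ω => by tauto]
    exact marg p Y _
  have hyz : ∀ b c, (∑ a' : A, ∑ ω : Ω, if X ω = a' ∧ Y ω = b ∧ Z ω = c then p ω else 0)
      = ∑ ω : Ω, if Y ω = b ∧ Z ω = c then p ω else 0 := by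
    intro b c
    exact marg p X _
  have hz : ∀ c, (∑ a' : A, ∑ b' : B, ∑ ω : Ω, if X ω = a' ∧ Y ω = b' ∧ Z ω = c then p ω else 0)
      = ∑ ω : Ω, if Z ω = c then p ω else 0 := by
    intro c
    rw [show (∑ a' : A, ∑ b' : B, ∑ ω : Ω, if X ω = a' ∧ Y ω = b' ∧ Z ω = c then p ω else 0)
        = ∑ a' : A, ∑ ω : Ω, if X ω = a' ∧ Z ω = c then p ω else 0 from
      Finset.sum_congr rfl fun a' _ => hxz a' c]
    exact marg p X _
  unfold condMI CMI
  refine Finset.sum_congr rfl fun a _ => Finset.sum_congr rfl fun b _ =>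
    Finset.sum_congr rfl fun c _ => ?_
  rw [hz c, hxz a c, hyz b c]

lemma mul_log_ge (q0 pa pb pc : ℝ) (hq0 : 0 ≤ q0) (hpa : 0 ≤ pa) (hpb : 0 ≤ pb) (hpc : 0 ≤ pc)
    (h : 0 < q0 → 0 < pa ∧ 0 < pb ∧ 0 < pc) :
    q0 - pa * pb / pc ≤ q0 * Real.log (q0 * pc / (pa * pb)) := by
  rcases hq0.eq_or_lt' with h0 | h0
  · subst h0
    simp only [zero_mul, zero_sub, neg_nonpos]
    positivity
  · obtain ⟨ha, hb, hc⟩ := h h0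
    have harg : 0 < q0 * pc / (pa * pb) := by positivity
    have hlog : 1 - (q0 * pc / (pa * pb))⁻¹ ≤ Real.log (q0 * pc / (pa * pb)) := by
      have := Real.log_le_sub_one_of_pos (inv_pos.mpr harg)
      rw [Real.log_inv] at this; linarith
    have hle := mul_le_mul_of_nonneg_left hlog h0.le
    have hid : q0 * (1 - (q0 * pc / (pa * pb))⁻¹) = q0 - pa * pb / pc := by
      field_simp
    linarith

lemma CMI_nonneg {A B C : Type} [Fintype A] [Fintype B] [Fintype C] (q : A → B → C → ℝ)
    (hq : ∀ a b c, 0 ≤ q a b c) : 0 ≤ CMI q := by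
  have key : ∀ a b c,
      q a b c - (∑ b' : B, q a b' c) * (∑ a' : A, q a' b c) / (∑ a' : A, ∑ b' : B, q a' b' c)
        ≤ q a b c * Real.log (q a b c * (∑ a' : A, ∑ b' : B, q a' b' c) /
          ((∑ b' : B, q a b' c) * (∑ a' : A, q a' b c))) := by
    intro a b c
    refine mul_log_ge _ _ _ _ (hq a b c) (Finset.sum_nonneg fun b' _ => hq a b' c)
      (Finset.sum_nonneg fun a' _ => hq a' b c)
      (Finset.sum_nonneg fun a' _ => Finset.sum_nonneg fun b' _ => hq a' b' c) ?_
    intro hpos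
    have h1 : q a b c ≤ ∑ b' : B, q a b' c :=
      Finset.single_le_sum (fun b' _ => hq a b' c) (mem_univ b)
    have h2 : (∑ b' : B, q a b' c) ≤ ∑ a' : A, ∑ b' : B, q a' b' c :=
      Finset.single_le_sum (fun a' _ => Finset.sum_nonneg fun b' _ => hq a' b' c) (mem_univ a)
    have h3 : q a b c ≤ ∑ a' : A, q a' b c :=
      Finset.single_le_sum (fun a' _ => hq a' b c) (mem_univ a)
    exact ⟨lt_of_lt_of_le hpos h1, lt_of_lt_of_le hpos h3,
      lt_of_lt_of_le (lt_of_lt_of_le hpos h1) h2⟩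
  have h1 : ∀ c : C, (∑ a : A, ∑ b : B,
      (q a b c - (∑ b' : B, q a b' c) * (∑ a' : A, q a' b c) /
        (∑ a' : A, ∑ b' : B, q a' b' c))) = 0 := by
    intro c
    have hS : (∑ b : B, ∑ a' : A, q a' b c) = ∑ a' : A, ∑ b' : B, q a' b' c :=
      Finset.sum_comm
    have hX : (∑ a : A, ∑ b : B, ((∑ b' : B, q a b' c) * (∑ a' : A, q a' b c) /
        (∑ a' : A, ∑ b' : B, q a' b' c))) = ∑ a' : A, ∑ b' : B, q a' b' c := by
      simp only [← Finset.sum_div, ← Finset.mul_sum, hS]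
      rw [← Finset.sum_mul]
      rcases eq_or_ne (∑ a' : A, ∑ b' : B, q a' b' c) 0 with h | h
      · simp [h]
      · rw [mul_div_assoc, div_self h, mul_one]
    simp only [Finset.sum_sub_distrib, hX, sub_eq_zero]
  calc (0:ℝ) = ∑ c : C, ∑ a : A, ∑ b : B,
      (q a b c - (∑ b' : B, q a b' c) * (∑ a' : A, q a' b c) /
        (∑ a' : A, ∑ b' : B, q a' b' c)) := by simp only [h1, Finset.sum_const_zero]
    _ = ∑ a : A, ∑ c : C, ∑ b : B,
      (q a b c - (∑ b' : B, q a b' c) * (∑ a' : A, q a' b c) /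
        (∑ a' : A, ∑ b' : B, q a' b' c)) := Finset.sum_comm
    _ = ∑ a : A, ∑ b : B, ∑ c : C,
      (q a b c - (∑ b' : B, q a b' c) * (∑ a' : A, q a' b c) /
        (∑ a' : A, ∑ b' : B, q a' b' c)) := Finset.sum_congr rfl fun a _ => Finset.sum_comm
    _ ≤ CMI q := Finset.sum_le_sum fun a _ => Finset.sum_le_sum fun b _ =>
        Finset.sum_le_sum fun c _ => key a b c

lemma CMI_comm {A B C : Type} [Fintype A] [Fintype B] [Fintype C] (q : A → B → C → ℝ) :
    CMI (fun b a c => q a b c) = CMI q := by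
  unfold CMI
  rw [Finset.sum_comm]
  refine Finset.sum_congr rfl fun a _ => Finset.sum_congr rfl fun b _ =>
    Finset.sum_congr rfl fun c _ => ?_
  rw [show (∑ b' : B, ∑ a' : A, q a' b' c) = ∑ a' : A, ∑ b' : B, q a' b' c from
    Finset.sum_comm, mul_comm (∑ a' : A, q a' b c) (∑ b' : B, q a b' c)]

lemma CMI_reindex_mid {A B B' C : Type} [Fintype A] [Fintype B] [Fintype B'] [Fintype C]
    (e : B' ≃ B) (q : A → B → C → ℝ) :
    CMI (fun a b' c => q a (e b') c) = CMI q := by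
  unfold CMI
  have hm : ∀ a c, (∑ b'' : B', q a (e b'') c) = ∑ b : B, q a b c := fun a c =>
    Fintype.sum_equiv e _ _ fun b'' => rfl
  simp only [hm]
  refine Finset.sum_congr rfl fun a _ => Fintype.sum_equiv e _ _ fun b' => rfl

lemma CMI_reindex_right {A B C C' : Type} [Fintype A] [Fintype B] [Fintype C] [Fintype C']
    (e : C' ≃ C) (q : A → B → C → ℝ) :
    CMI (fun a b c' => q a b (e c')) = CMI q := by
  unfold CMI
  refine Finset.sum_congr rfl fun a _ => Finset.sum_congr rfl fun b _ =>
    Fintype.sum_equiv e _ _ fun c' => rfl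

lemma CMI_chain {A B C D : Type} [Fintype A] [Fintype B] [Fintype C] [Fintype D]
    (Q : A → B → C → D → ℝ) (hQ : ∀ a b c d, 0 ≤ Q a b c d) :
    CMI (fun a (bc : B × C) d => Q a bc.1 bc.2 d)
      = CMI (fun a b d => ∑ c : C, Q a b c d) + CMI (fun a c (bd : B × D) => Q a bd.1 c bd.2) := by
  have key : ∀ (a : A) (b : B) (c : C) (d : D),
      Q a b c d * Real.log (Q a b c d * (∑ a' : A, ∑ b' : B, ∑ c' : C, Q a' b' c' d) /
          ((∑ b' : B, ∑ c' : C, Q a b' c' d) * (∑ a' : A, Q a' b c d)))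
        = Q a b c d * Real.log ((∑ c' : C, Q a b c' d) *
              (∑ a' : A, ∑ b' : B, ∑ c' : C, Q a' b' c' d) /
            ((∑ b' : B, ∑ c' : C, Q a b' c' d) * (∑ a' : A, ∑ c' : C, Q a' b c' d)))
          + Q a b c d * Real.log (Q a b c d * (∑ a' : A, ∑ c' : C, Q a' b c' d) /
            ((∑ c' : C, Q a b c' d) * (∑ a' : A, Q a' b c d))) := by
    intro a b c d
    rcases (hQ a b c d).eq_or_lt' with h0 | h0
    · rw [h0]; simp
    · have hqc : 0 < ∑ c' : C, Q a b c' d :=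
        lt_of_lt_of_le h0 (Finset.single_le_sum (fun c' _ => hQ a b c' d) (mem_univ c))
      have hsa : 0 < ∑ a' : A, Q a' b c d :=
        lt_of_lt_of_le h0 (Finset.single_le_sum (fun a' _ => hQ a' b c d) (mem_univ a))
      have hsac : 0 < ∑ a' : A, ∑ c' : C, Q a' b c' d :=
        lt_of_lt_of_le hqc (Finset.single_le_sum
          (fun a' _ => Finset.sum_nonneg fun c' _ => hQ a' b c' d) (mem_univ a))
      have hsbc : 0 < ∑ b' : B, ∑ c' : C, Q a b' c' d :=
        lt_of_lt_of_le hqc (Finset.single_le_sum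
          (fun b' _ => Finset.sum_nonneg fun c' _ => hQ a b' c' d) (mem_univ b))
      have hs4 : 0 < ∑ a' : A, ∑ b' : B, ∑ c' : C, Q a' b' c' d :=
        lt_of_lt_of_le hsbc (Finset.single_le_sum
          (fun a' _ => Finset.sum_nonneg fun b' _ => Finset.sum_nonneg fun c' _ => hQ a' b' c' d)
          (mem_univ a))
      have h2 : (0:ℝ) < (∑ c' : C, Q a b c' d) * (∑ a' : A, ∑ b' : B, ∑ c' : C, Q a' b' c' d) /
          ((∑ b' : B, ∑ c' : C, Q a b' c' d) * (∑ a' : A, ∑ c' : C, Q a' b c' d)) := by positivity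
      have h3 : (0:ℝ) < Q a b c d * (∑ a' : A, ∑ c' : C, Q a' b c' d) /
          ((∑ c' : C, Q a b c' d) * (∑ a' : A, Q a' b c d)) := by positivity
      have harg : Q a b c d * (∑ a' : A, ∑ b' : B, ∑ c' : C, Q a' b' c' d) /
          ((∑ b' : B, ∑ c' : C, Q a b' c' d) * (∑ a' : A, Q a' b c d))
          = ((∑ c' : C, Q a b c' d) * (∑ a' : A, ∑ b' : B, ∑ c' : C, Q a' b' c' d) /
            ((∑ b' : B, ∑ c' : C, Q a b' c' d) * (∑ a' : A, ∑ c' : C, Q a' b c' d))) *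
            (Q a b c d * (∑ a' : A, ∑ c' : C, Q a' b c' d) /
            ((∑ c' : C, Q a b c' d) * (∑ a' : A, Q a' b c d))) := by
        rw [div_mul_div_comm]
        rw [div_eq_div_iff (by positivity) (by positivity)]
        ring
      rw [harg, Real.log_mul h2.ne' h3.ne', mul_add]
  unfold CMI
  simp only [Fintype.sum_prod_type]
  trans (∑ a : A, ∑ b : B, ∑ c : C, ∑ d : D,
      (Q a b c d * Real.log ((∑ c' : C, Q a b c' d) *
              (∑ a' : A, ∑ b' : B, ∑ c' : C, Q a' b' c' d) /
            ((∑ b' : B, ∑ c' : C, Q a b' c' d) * (∑ a' : A, ∑ c' : C, Q a' b c' d)))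
          + Q a b c d * Real.log (Q a b c d * (∑ a' : A, ∑ c' : C, Q a' b c' d) /
            ((∑ c' : C, Q a b c' d) * (∑ a' : A, Q a' b c d)))))
  · exact Finset.sum_congr rfl fun a _ => Finset.sum_congr rfl fun b _ =>
      Finset.sum_congr rfl fun c _ => Finset.sum_congr rfl fun d _ => key a b c d
  · simp only [Finset.sum_add_distrib]
    congr 1
    · refine Finset.sum_congr rfl fun a _ => Finset.sum_congr rfl fun b _ => ?_
      rw [Finset.sum_comm]
      exact Finset.sum_congr rfl fun d _ => (Finset.sum_mul _ _ _).symm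
    · exact Finset.sum_congr rfl fun a _ => Finset.sum_comm

lemma main_CMI {A B C D : Type} [Fintype A] [Fintype B] [Fintype C] [Fintype D]
    (Q : A → B → C → D → ℝ) (hQ : ∀ a b c d, 0 ≤ Q a b c d)
    (hrep : CMI (fun c d (ab : A × B) => Q ab.1 ab.2 c d) = 0) :
    CMI (fun a c d => ∑ b : B, Q a b c d)
      ≤ CMI (fun a b d => ∑ c : C, Q a b c d) + CMI (fun a c b => ∑ d : D, Q a b c d) := by
  have c1 : CMI (fun a (bc : B × C) d => Q a bc.1 bc.2 d)
      = CMI (fun a b d => ∑ c : C, Q a b c d) + CMI (fun a c (bd : B × D) => Q a bd.1 c bd.2) :=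
    CMI_chain Q hQ
  have c2 : CMI (fun a (cb : C × B) d => Q a cb.2 cb.1 d)
      = CMI (fun a c d => ∑ b : B, Q a b c d) + CMI (fun a b (cd : C × D) => Q a b cd.1 cd.2) :=
    CMI_chain (fun a c b d => Q a b c d) (fun a c b d => hQ a b c d)
  have e12 : CMI (fun a (cb : C × B) d => Q a cb.2 cb.1 d)
      = CMI (fun a (bc : B × C) d => Q a bc.1 bc.2 d) :=
    CMI_reindex_mid (Equiv.prodComm C B) (fun a (bc : B × C) d => Q a bc.1 bc.2 d)
  have n1 : 0 ≤ CMI (fun a b (cd : C × D) => Q a b cd.1 cd.2) :=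
    CMI_nonneg _ (fun a b cd => hQ a b cd.1 cd.2)
  have hcomm1 : CMI (fun a c (bd : B × D) => Q a bd.1 c bd.2)
      = CMI (fun c a (bd : B × D) => Q a bd.1 c bd.2) :=
    CMI_comm (fun c a (bd : B × D) => Q a bd.1 c bd.2)
  have e34 : CMI (fun c a (db : D × B) => Q a db.2 c db.1)
      = CMI (fun c a (bd : B × D) => Q a bd.1 c bd.2) :=
    CMI_reindex_right (Equiv.prodComm D B) (fun c a (bd : B × D) => Q a bd.1 c bd.2)
  have c3 : CMI (fun c (ad : A × D) b => Q ad.1 b c ad.2)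
      = CMI (fun c a b => ∑ d : D, Q a b c d) + CMI (fun c d (ab : A × B) => Q ab.1 ab.2 c d) :=
    CMI_chain (fun c a d b => Q a b c d) (fun c a d b => hQ a b c d)
  have c4 : CMI (fun c (da : D × A) b => Q da.2 b c da.1)
      = CMI (fun c d b => ∑ a : A, Q a b c d) + CMI (fun c a (db : D × B) => Q a db.2 c db.1) :=
    CMI_chain (fun c d a b => Q a b c d) (fun c d a b => hQ a b c d)
  have e56 : CMI (fun c (da : D × A) b => Q da.2 b c da.1)
      = CMI (fun c (ad : A × D) b => Q ad.1 b c ad.2) :=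
    CMI_reindex_mid (Equiv.prodComm D A) (fun c (ad : A × D) b => Q ad.1 b c ad.2)
  have n2 : 0 ≤ CMI (fun c d b => ∑ a : A, Q a b c d) :=
    CMI_nonneg _ (fun c d b => Finset.sum_nonneg fun a _ => hQ a b c d)
  have hcomm2 : CMI (fun c a b => ∑ d : D, Q a b c d)
      = CMI (fun a c b => ∑ d : D, Q a b c d) :=
    CMI_comm (fun a c b => ∑ d : D, Q a b c d)
  linarith

theorem stmt0 {Ω A B C D : Type} [Fintype Ω] [Fintype A] [Fintype B] [Fintype C] [Fintype D]
    [DecidableEq A] [DecidableEq B] [DecidableEq C] [DecidableEq D]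
    (p : Ω → ℝ) (hp : ∀ ω, 0 ≤ p ω) (hp1 : ∑ ω : Ω, p ω = 1)
    (v1 : Ω → A) (v2 : Ω → B) (y : Ω → C) (z1 : Ω → D)
    (hrep : condMI p y z1 (fun ω => (v1 ω, v2 ω)) = 0) :
    condMI p v1 y z1 ≤ condMI p v1 v2 z1 + condMI p v1 y v2 := by
  have hnn : ∀ (a : A) (b : B) (c : C) (d : D),
      0 ≤ ∑ ω : Ω, if v1 ω = a ∧ v2 ω = b ∧ y ω = c ∧ z1 ω = d then p ω else 0 :=
    fun a b c d => Finset.sum_nonneg fun ω _ => by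
      split_ifs with h
      · exact hp ω
      · exact le_rfl
  have B1 : condMI p v1 y z1 = CMI (fun a c d =>
      ∑ b : B, ∑ ω : Ω, if v1 ω = a ∧ v2 ω = b ∧ y ω = c ∧ z1 ω = d then p ω else 0) := by
    rw [condMI_eq]
    refine congrArg CMI ?_
    funext a c d
    refine ((Finset.sum_congr rfl fun b _ => sumIf_congr p fun ω => ?_).trans
      (marg p v2 (fun ω => v1 ω = a ∧ y ω = c ∧ z1 ω = d))).symm
    tauto
  have B2 : condMI p v1 v2 z1 = CMI (fun a b d =>
      ∑ c : C, ∑ ω : Ω, if v1 ω = a ∧ v2 ω = b ∧ y ω = c ∧ z1 ω = d then p ω else 0) := by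
    rw [condMI_eq]
    refine congrArg CMI ?_
    funext a b d
    refine ((Finset.sum_congr rfl fun c _ => sumIf_congr p fun ω => ?_).trans
      (marg p y (fun ω => v1 ω = a ∧ v2 ω = b ∧ z1 ω = d))).symm
    tauto
  have B3 : condMI p v1 y v2 = CMI (fun a c b =>
      ∑ d : D, ∑ ω : Ω, if v1 ω = a ∧ v2 ω = b ∧ y ω = c ∧ z1 ω = d then p ω else 0) := by
    rw [condMI_eq]
    refine congrArg CMI ?_
    funext a c b
    refine ((Finset.sum_congr rfl fun d _ => sumIf_congr p fun ω => ?_).trans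
      (marg p z1 (fun ω => v1 ω = a ∧ y ω = c ∧ v2 ω = b))).symm
    constructor
    · rintro ⟨h1, h2, h3, h4⟩; exact ⟨h4, h1, h3, h2⟩
    · rintro ⟨h4, h1, h3, h2⟩; exact ⟨h1, h2, h3, h4⟩
  have B4 : condMI p y z1 (fun ω => (v1 ω, v2 ω)) = CMI (fun c d (ab : A × B) =>
      ∑ ω : Ω, if v1 ω = ab.1 ∧ v2 ω = ab.2 ∧ y ω = c ∧ z1 ω = d then p ω else 0) := by
    rw [condMI_eq]
    refine congrArg CMI ?_
    funext c d ab
    refine sumIf_congr p fun ω => ?_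
    rw [Prod.ext_iff]
    dsimp only
    tauto
  rw [B1, B2, B3]
  exact main_CMI _ hnn (B4.symm.trans hrep)
end

section
/- Let v1, v2, y be jointly distributed random variables and z1 satisfy I(y; z1 | v1, v2) = 0 and I(y; v1 | v2) = 0 (v1 is redundant with respect to v2 for y). If z1 is sufficient for v2, i.e., I(v1; v2 | z1) = 0, then z1 is sufficient for y, i.e., I(v1; y | z1) = 0. -/
open scoped BigOperators

lemma sum_if_congr {Ω : Type} [Fintype Ω] (p : Ω → ℝ) (Q R : Ω → Prop) [DecidablePred Q]
    [DecidablePred R] (h : ∀ ω, Q ω ↔ R ω) :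
    (∑ ω : Ω, if Q ω then p ω else 0) = ∑ ω : Ω, if R ω then p ω else 0 :=
  Finset.sum_congr rfl fun ω _ => by simp [h ω]

lemma sum_extract {Ω A : Type} [Fintype Ω] [Fintype A] [DecidableEq A] (p : Ω → ℝ) (X : Ω → A)
    (Q : Ω → Prop) [DecidablePred Q] :
    (∑ a : A, ∑ ω : Ω, if X ω = a ∧ Q ω then p ω else 0) = ∑ ω : Ω, if Q ω then p ω else 0 := by
  rw [Finset.sum_comm]
  refine Finset.sum_congr rfl fun ω _ => ?_
  by_cases h : Q ω <;> simp [h]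

section helpers
variable {Ω : Type} [Fintype Ω]

lemma sum_if_nonneg (p : Ω → ℝ) (hp : ∀ ω, 0 ≤ p ω) (Q : Ω → Prop) [DecidablePred Q] :
    0 ≤ ∑ ω : Ω, if Q ω then p ω else 0 :=
  Finset.sum_nonneg fun ω _ => by split <;> simp [hp ω]

lemma sum_if_mono (p : Ω → ℝ) (hp : ∀ ω, 0 ≤ p ω) (Q R : Ω → Prop)
    [DecidablePred Q] [DecidablePred R] (h : ∀ ω, Q ω → R ω) :
    (∑ ω : Ω, if Q ω then p ω else 0) ≤ ∑ ω : Ω, if R ω then p ω else 0 := by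
  refine Finset.sum_le_sum fun ω _ => ?_
  by_cases hq : Q ω
  · simp [hq, h ω hq]
  · simp only [hq, if_false]
    split <;> simp [hp ω]

lemma sum_extract_mid {A : Type} [Fintype A] [DecidableEq A] (p : Ω → ℝ) (X : Ω → A)
    (Q R : Ω → Prop) [DecidablePred Q] [DecidablePred R] :
    (∑ a : A, ∑ ω : Ω, if Q ω ∧ X ω = a ∧ R ω then p ω else 0)
      = ∑ ω : Ω, if Q ω ∧ R ω then p ω else 0 := by
  rw [Finset.sum_comm]
  refine Finset.sum_congr rfl fun ω _ => ?_
  by_cases h : Q ω <;> by_cases h' : R ω <;> simp [h, h']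

lemma chain_term (F M K G Hw H : ℝ) (hF : 0 ≤ F) (h1 : F ≤ M) (h2 : F ≤ K) (h3 : F ≤ G)
    (h4 : F ≤ Hw) (h5 : F ≤ H) :
    F * Real.log (F * K / (G * H))
      = F * Real.log (M * K / (G * Hw)) + F * Real.log (F * Hw / (M * H)) := by
  rcases eq_or_lt_of_le hF with h | h
  · simp [← h]
  · have hM : 0 < M := h.trans_le h1
    have hK : 0 < K := h.trans_le h2
    have hG : 0 < G := h.trans_le h3
    have hHw : 0 < Hw := h.trans_le h4
    have hH : 0 < H := h.trans_le h5
    have e : M * K / (G * Hw) * (F * Hw / (M * H)) = F * K / (G * H) := by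
      field_simp
    rw [← mul_add, ← Real.log_mul (by positivity) (by positivity), e]

end helpers

lemma condMI_chain {Ω A B B' C : Type} [Fintype Ω] [Fintype A] [Fintype B] [Fintype B']
    [Fintype C] [DecidableEq A] [DecidableEq B] [DecidableEq B'] [DecidableEq C]
    (p : Ω → ℝ) (hp : ∀ ω, 0 ≤ p ω) (X : Ω → A) (Y : Ω → B) (W : Ω → B') (Z : Ω → C) :
    condMI p X (fun ω => (Y ω, W ω)) Z
      = condMI p X W Z + condMI p X Y (fun ω => (W ω, Z ω)) := by
  unfold condMI
  simp only [Fintype.sum_prod_type, Prod.mk.injEq, and_assoc]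
  have mid : (∑ a : A, ∑ w : B', ∑ c : C,
      (∑ ω : Ω, if X ω = a ∧ W ω = w ∧ Z ω = c then p ω else 0) *
        Real.log
          ((∑ ω : Ω, if X ω = a ∧ W ω = w ∧ Z ω = c then p ω else 0) *
              (∑ ω : Ω, if Z ω = c then p ω else 0) /
            ((∑ ω : Ω, if X ω = a ∧ Z ω = c then p ω else 0) *
              (∑ ω : Ω, if W ω = w ∧ Z ω = c then p ω else 0))))
      = ∑ a : A, ∑ b : B, ∑ w : B', ∑ c : C,
        (∑ ω : Ω, if X ω = a ∧ Y ω = b ∧ W ω = w ∧ Z ω = c then p ω else 0) *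
          Real.log
            ((∑ ω : Ω, if X ω = a ∧ W ω = w ∧ Z ω = c then p ω else 0) *
                (∑ ω : Ω, if Z ω = c then p ω else 0) /
              ((∑ ω : Ω, if X ω = a ∧ Z ω = c then p ω else 0) *
                (∑ ω : Ω, if W ω = w ∧ Z ω = c then p ω else 0))) := by
    refine Finset.sum_congr rfl fun a _ => ?_
    calc (∑ w : B', ∑ c : C,
            (∑ ω : Ω, if X ω = a ∧ W ω = w ∧ Z ω = c then p ω else 0) *
              Real.log
                ((∑ ω : Ω, if X ω = a ∧ W ω = w ∧ Z ω = c then p ω else 0) *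
                    (∑ ω : Ω, if Z ω = c then p ω else 0) /
                  ((∑ ω : Ω, if X ω = a ∧ Z ω = c then p ω else 0) *
                    (∑ ω : Ω, if W ω = w ∧ Z ω = c then p ω else 0))))
        = ∑ w : B', ∑ c : C, ∑ b : B,
            (∑ ω : Ω, if X ω = a ∧ Y ω = b ∧ W ω = w ∧ Z ω = c then p ω else 0) *
              Real.log
                ((∑ ω : Ω, if X ω = a ∧ W ω = w ∧ Z ω = c then p ω else 0) *
                    (∑ ω : Ω, if Z ω = c then p ω else 0) /
                  ((∑ ω : Ω, if X ω = a ∧ Z ω = c then p ω else 0) *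
                    (∑ ω : Ω, if W ω = w ∧ Z ω = c then p ω else 0))) := by
          refine Finset.sum_congr rfl fun w _ => Finset.sum_congr rfl fun c _ => ?_
          rw [← Finset.sum_mul,
            sum_extract_mid p Y (fun ω => X ω = a) (fun ω => W ω = w ∧ Z ω = c)]
      _ = ∑ b : B, ∑ w : B', ∑ c : C,
            (∑ ω : Ω, if X ω = a ∧ Y ω = b ∧ W ω = w ∧ Z ω = c then p ω else 0) *
              Real.log
                ((∑ ω : Ω, if X ω = a ∧ W ω = w ∧ Z ω = c then p ω else 0) *
                    (∑ ω : Ω, if Z ω = c then p ω else 0) /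
                  ((∑ ω : Ω, if X ω = a ∧ Z ω = c then p ω else 0) *
                    (∑ ω : Ω, if W ω = w ∧ Z ω = c then p ω else 0))) := by
          rw [show (∑ w : B', ∑ c : C, ∑ b : B,
            (∑ ω : Ω, if X ω = a ∧ Y ω = b ∧ W ω = w ∧ Z ω = c then p ω else 0) *
              Real.log
                ((∑ ω : Ω, if X ω = a ∧ W ω = w ∧ Z ω = c then p ω else 0) *
                    (∑ ω : Ω, if Z ω = c then p ω else 0) /
                  ((∑ ω : Ω, if X ω = a ∧ Z ω = c then p ω else 0) *
                    (∑ ω : Ω, if W ω = w ∧ Z ω = c then p ω else 0)))) = ∑ w : B', ∑ b : B, ∑ c : C,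
            (∑ ω : Ω, if X ω = a ∧ Y ω = b ∧ W ω = w ∧ Z ω = c then p ω else 0) *
              Real.log
                ((∑ ω : Ω, if X ω = a ∧ W ω = w ∧ Z ω = c then p ω else 0) *
                    (∑ ω : Ω, if Z ω = c then p ω else 0) /
                  ((∑ ω : Ω, if X ω = a ∧ Z ω = c then p ω else 0) *
                    (∑ ω : Ω, if W ω = w ∧ Z ω = c then p ω else 0)))
            from Finset.sum_congr rfl fun w _ => Finset.sum_comm]
          exact Finset.sum_comm
  rw [mid, ← Finset.sum_add_distrib]
  refine Finset.sum_congr rfl fun a _ => ?_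
  rw [← Finset.sum_add_distrib]
  refine Finset.sum_congr rfl fun b _ => ?_
  rw [← Finset.sum_add_distrib]
  refine Finset.sum_congr rfl fun w _ => ?_
  rw [← Finset.sum_add_distrib]
  refine Finset.sum_congr rfl fun c _ => ?_
  refine chain_term _ _ _ _ _ _ (sum_if_nonneg p hp _) ?_ ?_ ?_ ?_ ?_
  · exact sum_if_mono p hp _ _ fun ω h => ⟨h.1, h.2.2.1, h.2.2.2⟩
  · exact sum_if_mono p hp _ _ fun ω h => h.2.2.2
  · exact sum_if_mono p hp _ _ fun ω h => ⟨h.1, h.2.2.2⟩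
  · exact sum_if_mono p hp _ _ fun ω h => ⟨h.2.2.1, h.2.2.2⟩
  · exact sum_if_mono p hp _ _ fun ω h => ⟨h.2.1, h.2.2.1, h.2.2.2⟩


lemma term_ge (f g h k : ℝ) (hf : 0 ≤ f) (hfg : f ≤ g) (hfh : f ≤ h) (hgk : g ≤ k) :
    f - g * h / k ≤ f * Real.log (f * k / (g * h)) := by
  rcases eq_or_lt_of_le hf with hf0 | hf0
  · have hg : 0 ≤ g := le_trans hf hfg
    have hh : 0 ≤ h := le_trans hf hfh
    have hk : 0 ≤ k := le_trans hg hgk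
    have : 0 ≤ g * h / k := by positivity
    simp [← hf0]
    linarith
  · have hg : 0 < g := lt_of_lt_of_le hf0 hfg
    have hh : 0 < h := lt_of_lt_of_le hf0 hfh
    have hk : 0 < k := lt_of_lt_of_le hg hgk
    have hlog : Real.log (g * h / (f * k)) ≤ g * h / (f * k) - 1 :=
      Real.log_le_sub_one_of_pos (by positivity)
    have hinv : Real.log (g * h / (f * k)) = - Real.log (f * k / (g * h)) := by
      rw [← Real.log_inv]; congr 1; field_simp
    rw [hinv] at hlog
    have h1 : 1 - g * h / (f * k) ≤ Real.log (f * k / (g * h)) := by linarith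
    have h2 := mul_le_mul_of_nonneg_left h1 (le_of_lt hf0)
    refine le_trans (le_of_eq ?_) h2
    field_simp

lemma self_mul_div (k : ℝ) : k * k / k = k := by
  rcases eq_or_ne k 0 with h | h
  · simp [h]
  · field_simp

lemma condMI_nonneg {Ω A B C : Type} [Fintype Ω] [Fintype A] [Fintype B] [Fintype C]
    [DecidableEq A] [DecidableEq B] [DecidableEq C]
    (p : Ω → ℝ) (hp : ∀ ω, 0 ≤ p ω) (X : Ω → A) (Y : Ω → B) (Z : Ω → C) :
    0 ≤ condMI p X Y Z := by
  have key : (∑ a : A, ∑ b : B, ∑ c : C,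
      ((∑ ω : Ω, if X ω = a ∧ Y ω = b ∧ Z ω = c then p ω else 0) -
        (∑ ω : Ω, if X ω = a ∧ Z ω = c then p ω else 0) *
          (∑ ω : Ω, if Y ω = b ∧ Z ω = c then p ω else 0) /
          (∑ ω : Ω, if Z ω = c then p ω else 0))) = 0 := by
    simp only [Finset.sum_sub_distrib]
    rw [sub_eq_zero]
    have lhs1 : (∑ a : A, ∑ b : B, ∑ c : C,
        (∑ ω : Ω, if X ω = a ∧ Y ω = b ∧ Z ω = c then p ω else 0))
        = ∑ c : C, ∑ ω : Ω, if Z ω = c then p ω else 0 := by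
      calc (∑ a : A, ∑ b : B, ∑ c : C,
              (∑ ω : Ω, if X ω = a ∧ Y ω = b ∧ Z ω = c then p ω else 0))
          = ∑ a : A, ∑ c : C, ∑ b : B,
              (∑ ω : Ω, if X ω = a ∧ Y ω = b ∧ Z ω = c then p ω else 0) := by
            exact Finset.sum_congr rfl fun a _ => Finset.sum_comm
        _ = ∑ a : A, ∑ c : C, (∑ ω : Ω, if X ω = a ∧ Z ω = c then p ω else 0) := by
            exact Finset.sum_congr rfl fun a _ => Finset.sum_congr rfl fun c _ =>
              sum_extract_mid p Y _ _
        _ = ∑ c : C, ∑ a : A, (∑ ω : Ω, if X ω = a ∧ Z ω = c then p ω else 0) :=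
            Finset.sum_comm
        _ = ∑ c : C, ∑ ω : Ω, if Z ω = c then p ω else 0 :=
            Finset.sum_congr rfl fun c _ => sum_extract p X _
    have rhs1 : (∑ a : A, ∑ b : B, ∑ c : C,
        (∑ ω : Ω, if X ω = a ∧ Z ω = c then p ω else 0) *
          (∑ ω : Ω, if Y ω = b ∧ Z ω = c then p ω else 0) /
          (∑ ω : Ω, if Z ω = c then p ω else 0))
        = ∑ c : C, ∑ ω : Ω, if Z ω = c then p ω else 0 := by
      calc (∑ a : A, ∑ b : B, ∑ c : C,
              (∑ ω : Ω, if X ω = a ∧ Z ω = c then p ω else 0) *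
                (∑ ω : Ω, if Y ω = b ∧ Z ω = c then p ω else 0) /
                (∑ ω : Ω, if Z ω = c then p ω else 0))
          = ∑ a : A, ∑ c : C, ∑ b : B,
              (∑ ω : Ω, if X ω = a ∧ Z ω = c then p ω else 0) *
                (∑ ω : Ω, if Y ω = b ∧ Z ω = c then p ω else 0) /
                (∑ ω : Ω, if Z ω = c then p ω else 0) := by
            exact Finset.sum_congr rfl fun a _ => Finset.sum_comm
        _ = ∑ a : A, ∑ c : C,
              (∑ ω : Ω, if X ω = a ∧ Z ω = c then p ω else 0) *
                (∑ ω : Ω, if Z ω = c then p ω else 0) /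
                (∑ ω : Ω, if Z ω = c then p ω else 0) := by
            refine Finset.sum_congr rfl fun a _ => Finset.sum_congr rfl fun c _ => ?_
            rw [← Finset.sum_div, ← Finset.mul_sum, sum_extract p Y]
        _ = ∑ c : C, ∑ a : A,
              (∑ ω : Ω, if X ω = a ∧ Z ω = c then p ω else 0) *
                (∑ ω : Ω, if Z ω = c then p ω else 0) /
                (∑ ω : Ω, if Z ω = c then p ω else 0) :=
            Finset.sum_comm
        _ = ∑ c : C, ∑ ω : Ω, if Z ω = c then p ω else 0 := by
            refine Finset.sum_congr rfl fun c _ => ?_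
            rw [← Finset.sum_div, ← Finset.sum_mul, sum_extract p X, self_mul_div]
    rw [lhs1, rhs1]
  rw [← key]
  unfold condMI
  refine Finset.sum_le_sum fun a _ => Finset.sum_le_sum fun b _ =>
    Finset.sum_le_sum fun c _ => ?_
  refine term_ge _ _ _ _ ?_ ?_ ?_ ?_
  · exact sum_if_nonneg p hp _
  · exact sum_if_mono p hp _ _ fun ω h => ⟨h.1, h.2.2⟩
  · exact sum_if_mono p hp _ _ fun ω h => ⟨h.2.1, h.2.2⟩
  · exact sum_if_mono p hp _ _ fun ω h => h.2


lemma condMI_symm {Ω A B C : Type} [Fintype Ω] [Fintype A] [Fintype B] [Fintype C]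
    [DecidableEq A] [DecidableEq B] [DecidableEq C]
    (p : Ω → ℝ) (X : Ω → A) (Y : Ω → B) (Z : Ω → C) :
    condMI p X Y Z = condMI p Y X Z := by
  unfold condMI
  rw [Finset.sum_comm]
  refine Finset.sum_congr rfl fun b _ => Finset.sum_congr rfl fun a _ =>
    Finset.sum_congr rfl fun c _ => ?_
  have hs : (∑ ω : Ω, if X ω = a ∧ Y ω = b ∧ Z ω = c then p ω else 0)
      = ∑ ω : Ω, if Y ω = b ∧ X ω = a ∧ Z ω = c then p ω else 0 :=
    sum_if_congr p _ _ fun ω => by tauto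
  rw [hs, mul_comm (∑ ω : Ω, if X ω = a ∧ Z ω = c then p ω else 0)
    (∑ ω : Ω, if Y ω = b ∧ Z ω = c then p ω else 0)]

lemma condMI_reindex_Y {Ω A B B' C : Type} [Fintype Ω] [Fintype A] [Fintype B] [Fintype B']
    [Fintype C] [DecidableEq A] [DecidableEq B] [DecidableEq B'] [DecidableEq C]
    (p : Ω → ℝ) (X : Ω → A) (Y : Ω → B) (Z : Ω → C) (e : B ≃ B') (Y' : Ω → B')
    (hY : ∀ ω, Y' ω = e (Y ω)) :
    condMI p X Y' Z = condMI p X Y Z := by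
  unfold condMI
  refine Finset.sum_congr rfl fun a _ => ?_
  rw [← Equiv.sum_comp e]
  refine Finset.sum_congr rfl fun b _ => Finset.sum_congr rfl fun c _ => ?_
  simp only [hY, EmbeddingLike.apply_eq_iff_eq]

lemma condMI_reindex_Z {Ω A B C C' : Type} [Fintype Ω] [Fintype A] [Fintype B] [Fintype C]
    [Fintype C'] [DecidableEq A] [DecidableEq B] [DecidableEq C] [DecidableEq C']
    (p : Ω → ℝ) (X : Ω → A) (Y : Ω → B) (Z : Ω → C) (e : C ≃ C') (Z' : Ω → C')
    (hZ : ∀ ω, Z' ω = e (Z ω)) :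
    condMI p X Y Z' = condMI p X Y Z := by
  unfold condMI
  refine Finset.sum_congr rfl fun a _ => Finset.sum_congr rfl fun b _ => ?_
  rw [← Equiv.sum_comp e]
  refine Finset.sum_congr rfl fun c _ => ?_
  simp only [hZ, EmbeddingLike.apply_eq_iff_eq]

theorem stmt1 {Ω A B C D : Type} [Fintype Ω] [Fintype A] [Fintype B] [Fintype C] [Fintype D]
    [DecidableEq A] [DecidableEq B] [DecidableEq C] [DecidableEq D]
    (p : Ω → ℝ) (hp : ∀ ω, 0 ≤ p ω) (hp1 : ∑ ω : Ω, p ω = 1)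
    (v1 : Ω → A) (v2 : Ω → B) (y : Ω → C) (z1 : Ω → D)
    (hrep : condMI p y z1 (fun ω => (v1 ω, v2 ω)) = 0)
    (hred : condMI p y v1 v2 = 0)
    (hsuff : condMI p v1 v2 z1 = 0) :
    condMI p v1 y z1 = 0 := by
  -- Step 1: I(y; v1 | (z1, v2)) = 0
  have h1 : condMI p y (fun ω => (z1 ω, v1 ω)) v2
      = condMI p y v1 v2 + condMI p y z1 (fun ω => (v1 ω, v2 ω)) :=
    condMI_chain p hp y z1 v1 v2
  have h2 : condMI p y (fun ω => (v1 ω, z1 ω)) v2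
      = condMI p y z1 v2 + condMI p y v1 (fun ω => (z1 ω, v2 ω)) :=
    condMI_chain p hp y v1 z1 v2
  have hsw1 : condMI p y (fun ω => (v1 ω, z1 ω)) v2
      = condMI p y (fun ω => (z1 ω, v1 ω)) v2 :=
    condMI_reindex_Y p y (fun ω => (z1 ω, v1 ω)) v2 (Equiv.prodComm D A)
      (fun ω => (v1 ω, z1 ω)) (fun ω => rfl)
  have n1 : 0 ≤ condMI p y z1 v2 := condMI_nonneg p hp _ _ _
  have n2 : 0 ≤ condMI p y v1 (fun ω => (z1 ω, v2 ω)) := condMI_nonneg p hp _ _ _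
  have key1 : condMI p y v1 (fun ω => (z1 ω, v2 ω)) = 0 := by
    rw [hsw1, h1, hred, hrep] at h2
    linarith
  -- transfer to conditioning on (v2, z1)
  have key1' : condMI p v1 y (fun ω => (v2 ω, z1 ω)) = 0 := by
    rw [condMI_symm p v1 y (fun ω => (v2 ω, z1 ω)),
      condMI_reindex_Z p y v1 (fun ω => (z1 ω, v2 ω)) (Equiv.prodComm D B)
        (fun ω => (v2 ω, z1 ω)) (fun ω => rfl), key1]
  -- Step 2: chain on the other side
  have h3 : condMI p v1 (fun ω => (v2 ω, y ω)) z1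
      = condMI p v1 y z1 + condMI p v1 v2 (fun ω => (y ω, z1 ω)) :=
    condMI_chain p hp v1 v2 y z1
  have h4 : condMI p v1 (fun ω => (y ω, v2 ω)) z1
      = condMI p v1 v2 z1 + condMI p v1 y (fun ω => (v2 ω, z1 ω)) :=
    condMI_chain p hp v1 y v2 z1
  have hsw2 : condMI p v1 (fun ω => (v2 ω, y ω)) z1
      = condMI p v1 (fun ω => (y ω, v2 ω)) z1 :=
    condMI_reindex_Y p v1 (fun ω => (y ω, v2 ω)) z1 (Equiv.prodComm C B)
      (fun ω => (v2 ω, y ω)) (fun ω => rfl)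
  have n3 : 0 ≤ condMI p v1 y z1 := condMI_nonneg p hp _ _ _
  have n4 : 0 ≤ condMI p v1 v2 (fun ω => (y ω, z1 ω)) := condMI_nonneg p hp _ _ _
  rw [hsw2, h4, hsuff, key1'] at h3
  linarith
end
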